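/- Let h : ℝ → ℝ be strictly decreasing with h(p*) = 0, and let p : ℝ → ℝ be differentiable with p'(t) = h(p(t)) for all t ≥ 0. Then the function t ↦ |p(t) − p*| is antitone (nonincreasing) on [0, ∞). -/

import Mathlib

private lemma upper_bound_aux
    (h : ℝ → ℝ) (hanti : StrictAnti h)
    (pstar : ℝ) (hzero : h pstar = 0)
    (p : ℝ → ℝ) (hdiff : Differentiable ℝ p)
    (hode : ∀ t : ℝ, 0 ≤ t → deriv p t = h (p t))
    (s t : ℝ) (hs : 0 ≤ s) (hst : s ≤ t) :
    p t ≤ max (p s) pstar := by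
  by_contra hlt
  push_neg at hlt
  set M := max (p s) pstar with hM
  set S : Set ℝ := Set.Icc s t ∩ p ⁻¹' Set.Iic M with hS
  have hSclosed : IsClosed S :=
    (isClosed_Icc).inter (isClosed_Iic.preimage hdiff.continuous)
  have hSne : S.Nonempty := ⟨s, ⟨le_refl s, hst⟩, show p s ≤ M from le_max_left _ _⟩
  have hSbdd : BddAbove S := ⟨t, fun x hx => hx.1.2⟩
  set u := sSup S with hu
  have huS : u ∈ S := hSclosed.csSup_mem hSne hSbdd
  have hus : s ≤ u := huS.1.1
  have hut : u ≤ t := huS.1.2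
  have hpu : p u ≤ M := huS.2
  have hunet : u < t := hut.lt_of_ne (fun he => absurd hpu (by rw [he]; exact not_le.mpr hlt))
  -- on (u, t], p > M
  have hgt : ∀ x ∈ Set.Ioc u t, M < p x := by
    intro x hx
    by_contra hc
    push_neg at hc
    have : x ∈ S := ⟨⟨hus.trans hx.1.le, hx.2⟩, hc⟩
    exact absurd (le_csSup hSbdd this) (not_le.mpr hx.1)
  have hderiv : ∀ x ∈ interior (Set.Icc u t), deriv p x < 0 := by
    intro x hx
    rw [interior_Icc] at hx
    have hx0 : (0 : ℝ) ≤ x := hs.trans (hus.trans hx.1.le)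
    rw [hode x hx0]
    have : pstar < p x := lt_of_le_of_lt (le_max_right _ _) (hgt x ⟨hx.1, hx.2.le⟩)
    have := hanti this
    rwa [hzero] at this
  have hmono : StrictAntiOn p (Set.Icc u t) :=
    strictAntiOn_of_deriv_neg (convex_Icc u t) hdiff.continuous.continuousOn hderiv
  have : p t < p u := hmono ⟨le_refl u, hunet.le⟩ ⟨hunet.le, le_refl t⟩ hunet
  exact absurd (this.trans_le hpu) (not_lt.mpr hlt.le)

/-- Lyapunov stability for the scalar price dynamics: if `h` is strictly decreasing with
`h(p*) = 0` and `p` is a differentiable trajectory with `p'(t) = h(p(t))` for all `t ≥ 0`,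
then `t ↦ |p(t) - p*|` is nonincreasing on `[0, ∞)`. -/
theorem dist_to_equilibrium_antitone
    (h : ℝ → ℝ) (hanti : StrictAnti h)
    (pstar : ℝ) (hzero : h pstar = 0)
    (p : ℝ → ℝ) (hdiff : Differentiable ℝ p)
    (hode : ∀ t : ℝ, 0 ≤ t → deriv p t = h (p t)) :
    AntitoneOn (fun t => |p t - pstar|) (Set.Ici (0 : ℝ)) := by
  intro s hs t _ hst
  have hupper := upper_bound_aux h hanti pstar hzero p hdiff hode s t hs hst
  -- lower bound via the negated system
  have hlower : min (p s) pstar ≤ p t := by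
    have hanti' : StrictAnti (fun x => -h (-x)) := fun x y hxy =>
      neg_lt_neg (hanti (neg_lt_neg hxy))
    have hzero' : (fun x => -h (-x)) (-pstar) = 0 := by simp [hzero]
    have hdiff' : Differentiable ℝ (fun x => -p x) := hdiff.neg
    have hode' : ∀ x : ℝ, 0 ≤ x → deriv (fun x => -p x) x = (fun x => -h (-x)) (-p x) := by
      intro x hx
      rw [deriv.fun_neg, hode x hx]
      simp
    have := upper_bound_aux (fun x => -h (-x)) hanti' (-pstar) hzero'
      (fun x => -p x) hdiff' hode' s t hs hst
    rw [max_neg_neg] at this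
    have h2 : -p t ≤ -(min (p s) pstar) := this
    linarith
  show |p t - pstar| ≤ |p s - pstar|
  rcases le_total (p s) pstar with hc | hc
  · rw [min_eq_left hc] at hlower
    rw [max_eq_right hc] at hupper
    rw [abs_of_nonpos (by linarith), abs_of_nonpos (by linarith : p s - pstar ≤ 0)]
    linarith
  · rw [min_eq_right hc] at hlower
    rw [max_eq_left hc] at hupper
    rw [abs_of_nonneg (by linarith), abs_of_nonneg (by linarith)]
    linarith
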